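/- arXiv:1607.04737 — 2 statements merged into one kernel-verified Lean document; each statement's English description precedes it below -/
import Mathlib

section
/- In the Pa^c(σ,γ) model, the survival function of the maximum X_+ = max_{1≤i≤n} X_i is the alternating sum of the survival functions of sub-minima: for every x ≥ 0, ν{max_{1≤i≤n} X_i > x} = ∑_{∅ ≠ S ⊆ {1,…,n}} (−1)^{|S|−1} · ν{min_{i∈S} X_i > x} = ∑_{∅ ≠ S ⊆ {1,…,n}} (−1)^{|S|−1} · ∏_{j=1}^{n+1} (1 + x·∑_{i∈S} c_{i,j}/σ_i)^{−γ_j}. -/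
open MeasureTheory ProbabilityTheory Real

section Helpers

lemma aux_ie {n : ℕ} (t : Fin n → ℝ) :
    1 - ∏ i, (1 - t i)
      = ∑ S ∈ Finset.univ.powerset.filter Finset.Nonempty,
          (-1 : ℝ) ^ (S.card - 1) * ∏ i ∈ S, t i := by
  classical
  have h : ∏ i, (1 - t i)
      = ∑ S ∈ (Finset.univ : Finset (Fin n)).powerset, (-1:ℝ) ^ S.card * ∏ i ∈ S, t i := by
    have h0 := Finset.prod_add (fun i => (-1:ℝ) * t i) (fun _ => (1:ℝ)) Finset.univ
    simp only [Finset.prod_const_one, mul_one, Finset.prod_mul_distrib, Finset.prod_const] at h0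
    rw [← h0]
    exact Finset.prod_congr rfl fun i _ => by ring
  have hsplit := Finset.sum_filter_add_sum_filter_not
      ((Finset.univ : Finset (Fin n)).powerset) (fun S => S.Nonempty)
      (fun S => (-1:ℝ) ^ S.card * ∏ i ∈ S, t i)
  have hempty : ∑ S ∈ ((Finset.univ : Finset (Fin n)).powerset.filter fun S => ¬ S.Nonempty),
      (-1:ℝ) ^ S.card * ∏ i ∈ S, t i = 1 := by
    have he : ((Finset.univ : Finset (Fin n)).powerset.filter fun S => ¬ S.Nonempty)
        = {(∅ : Finset (Fin n))} := by
      ext S; simp [Finset.not_nonempty_iff_eq_empty]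
    rw [he, Finset.sum_singleton]; simp
  have hA : ∑ S ∈ (Finset.univ : Finset (Fin n)).powerset.filter Finset.Nonempty,
      (-1:ℝ) ^ S.card * ∏ i ∈ S, t i
      = - ∑ S ∈ Finset.univ.powerset.filter Finset.Nonempty,
          (-1 : ℝ) ^ (S.card - 1) * ∏ i ∈ S, t i := by
    rw [← Finset.sum_neg_distrib]
    refine Finset.sum_congr rfl fun S hS => ?_
    have hne : S.Nonempty := (Finset.mem_filter.mp hS).2
    obtain ⟨k, hk⟩ : ∃ k, S.card = k + 1 :=
      ⟨S.card - 1, (Nat.succ_pred_eq_of_pos hne.card_pos).symm⟩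
    rw [hk, Nat.add_sub_cancel, pow_succ]; ring
  rw [h, ← hsplit, hempty, hA]; ring

lemma prod_exp_neg {ι : Type*} (S : Finset ι) (f : ι → ℝ) :
    ∏ i ∈ S, exp (-(f i)) = exp (-(∑ i ∈ S, f i)) := by
  rw [← Real.exp_sum, Finset.sum_neg_distrib]

lemma lintegral_pi_prod : ∀ {m : ℕ} (μ : Fin m → Measure ℝ), (∀ i, SigmaFinite (μ i)) →
    ∀ (f : Fin m → ℝ → ENNReal), (∀ i, Measurable (f i)) →
    ∫⁻ y, ∏ i, f i (y i) ∂Measure.pi μ = ∏ i, ∫⁻ t, f i t ∂μ i := by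
  intro m
  induction m with
  | zero =>
      intro μ _ f _
      simp [lintegral_const]
  | succ m ih =>
      intro μ hμ f hf
      haveI := hμ
      rw [MeasurePreserving.lintegral_map_equiv (fun y => ∏ i, f i (y i))
        (MeasurableEquiv.piFinSuccAbove (fun _ => ℝ) 0).symm
        (measurePreserving_piFinSuccAbove μ 0).symm]
      have hstep : ∀ p : ℝ × (Fin m → ℝ),
          (∏ i, f i (((MeasurableEquiv.piFinSuccAbove (fun _ => ℝ) 0).symm p) i))
            = f 0 p.1 * ∏ i : Fin m, f i.succ (p.2 i) := by
        intro p
        simp [MeasurableEquiv.piFinSuccAbove_symm_apply, Fin.insertNth_zero,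
          Fin.prod_univ_succ]
      simp only [hstep, Fin.zero_succAbove]
      have hg : Measurable fun w : Fin m → ℝ => ∏ i : Fin m, f i.succ (w i) :=
        Finset.measurable_prod _ fun i _ => (hf i.succ).comp (measurable_pi_apply i)
      rw [lintegral_prod_mul (f := f 0) (g := fun w : Fin m → ℝ => ∏ i, f i.succ (w i))
        (hf 0).aemeasurable hg.aemeasurable]
      rw [ih (fun i => μ i.succ) (fun i => hμ i.succ) (fun i => f i.succ) (fun i => hf i.succ)]
      rw [Fin.prod_univ_succ]

lemma gammaMeasure_Iic_zero (a r : ℝ) : gammaMeasure a r (Set.Iic 0) = 0 := by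
  rw [gammaMeasure, withDensity_apply _ measurableSet_Iic,
    setLIntegral_congr (Filter.EventuallyEq.symm Iio_ae_eq_Iic)]
  rw [setLIntegral_congr_fun_ae measurableSet_Iio
    (ae_of_all _ fun y (hy : y < 0) => gammaPDF_of_neg hy)]
  simp

lemma gammaOne_Ioi {t : ℝ} (ht : 0 ≤ t) :
    gammaMeasure 1 1 (Set.Ioi t) = ENNReal.ofReal (exp (-t)) := by
  rw [gammaMeasure, withDensity_apply _ measurableSet_Ioi]
  rw [setLIntegral_congr_fun_ae (g := fun y => ENNReal.ofReal (exp (-y))) measurableSet_Ioi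
    (ae_of_all _ fun y (hy : t < y) => by
      rw [gammaPDF_of_nonneg (le_trans ht hy.le)]
      norm_num [Real.Gamma_one, Real.rpow_zero, Real.one_rpow])]
  rw [← ofReal_integral_eq_lintegral_ofReal
    (IntegrableOn.integrable (by simpa using exp_neg_integrableOn_Ioi t one_pos))
    (ae_of_all _ fun y => exp_nonneg _)]
  rw [integral_exp_neg_Ioi]

lemma gammaOne_Iic {t : ℝ} (ht : 0 ≤ t) :
    gammaMeasure 1 1 (Set.Iic t) = ENNReal.ofReal (1 - exp (-t)) := by
  haveI : IsProbabilityMeasure (gammaMeasure (1:ℝ) 1) :=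
    isProbabilityMeasure_gammaMeasure one_pos one_pos
  have h := prob_compl_eq_one_sub (μ := gammaMeasure 1 1) (measurableSet_Ioi (a := t))
  rw [Set.compl_Ioi] at h
  rw [h, gammaOne_Ioi ht, ENNReal.ofReal_sub _ (exp_nonneg _), ENNReal.ofReal_one]

lemma gamma_laplace {a s : ℝ} (ha : 0 < a) (hs : 0 ≤ s) :
    ∫⁻ y, ENNReal.ofReal (exp (-(s * y))) ∂gammaMeasure a 1
      = ENNReal.ofReal ((1 + s) ^ (-a)) := by
  have h1s : (0:ℝ) < 1 + s := by linarith
  have hm : Measurable (gammaPDF a 1) := (measurable_gammaPDFReal a 1).ennreal_ofReal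
  rw [gammaMeasure, lintegral_withDensity_eq_lintegral_mul _ hm
    (Measurable.ennreal_ofReal (by fun_prop))]
  have hpt : ∀ y : ℝ, (gammaPDF a 1 * fun y => ENNReal.ofReal (exp (-(s * y)))) y
      = ENNReal.ofReal ((1 + s) ^ (-a)) * gammaPDF a (1 + s) y := by
    intro y
    rcases lt_or_ge y 0 with hy | hy
    · simp [gammaPDF_of_neg hy]
    · rw [Pi.mul_apply, gammaPDF_of_nonneg hy, gammaPDF_of_nonneg hy,
        ← ENNReal.ofReal_mul (by positivity), ← ENNReal.ofReal_mul (by positivity)]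
      congr 1
      have hexp : exp (-(1 * y)) * exp (-(s * y)) = exp (-((1 + s) * y)) := by
        rw [← Real.exp_add]; ring_nf
      have hpow : (1 + s) ^ (-a) * (1 + s) ^ a = 1 := by
        rw [← Real.rpow_add h1s]; simp
      calc (1:ℝ) ^ a / Gamma a * y ^ (a - 1) * exp (-(1 * y)) * exp (-(s * y))
          = ((1 + s) ^ (-a) * (1 + s) ^ a) * ((1:ℝ) ^ a / Gamma a * y ^ (a - 1))
              * (exp (-(1 * y)) * exp (-(s * y))) := by rw [hpow]; ring
        _ = (1 + s) ^ (-a) * ((1 + s) ^ a / Gamma a * y ^ (a - 1) * exp (-((1 + s) * y))) := by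
            rw [hexp, Real.one_rpow]; ring
  simp only [hpt]
  have hm2 : Measurable (gammaPDF a (1 + s)) := (measurable_gammaPDFReal a (1 + s)).ennreal_ofReal
  rw [lintegral_const_mul _ hm2, lintegral_gammaPDF_eq_one ha h1s, mul_one]

lemma ae_pi_pos {m : ℕ} (μ : Fin m → Measure ℝ) [∀ i, SigmaFinite (μ i)]
    (h0 : ∀ i, μ i (Set.Iic 0) = 0) :
    ∀ᵐ y ∂Measure.pi μ, ∀ j, 0 < y j := by
  rw [MeasureTheory.ae_all_iff]
  intro j
  rw [MeasureTheory.ae_iff]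
  have hset : {y : Fin m → ℝ | ¬ 0 < y j}
      = Set.pi Set.univ (fun k => if k = j then Set.Iic 0 else Set.univ) := by
    ext y
    simp only [Set.mem_setOf_eq, not_lt, Set.mem_pi, Set.mem_univ, true_implies]
    constructor
    · intro h k
      by_cases hk : k = j
      · subst hk; simpa using h
      · simp [hk]
    · intro h
      have := h j
      simpa using this
  rw [hset, Measure.pi_pi]
  exact Finset.prod_eq_zero (Finset.mem_univ j) (by simp [h0 j])

end Helpers

/-- The `Pa^c(σ,γ)` model measure. -/
noncomputable def paretoModelMeasure (n : ℕ) (γ : Fin (n + 1) → ℝ) :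
    Measure ((Fin n → ℝ) × (Fin (n + 1) → ℝ)) :=
  (Measure.pi fun _ : Fin n => gammaMeasure 1 1).prod
    (Measure.pi fun j => gammaMeasure (γ j) 1)

/-- The coordinates `X_i(λ,y) = σ_i λ_i / ∑_j c_{i,j} y_j`. -/
noncomputable def paretoCoord (n : ℕ) (σ : Fin n → ℝ) (c : Fin n → Fin (n + 1) → ℝ)
    (i : Fin n) (p : (Fin n → ℝ) × (Fin (n + 1) → ℝ)) : ℝ :=
  σ i * p.1 i / ∑ j, c i j * p.2 j

/-- inclusion–exclusion for the survival function of the maximum: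
`ν{max_i X_i > x} = ∑_{∅≠S} (-1)^{|S|-1} ν{min_{i∈S} X_i > x}
                  = ∑_{∅≠S} (-1)^{|S|-1} ∏_j (1 + x ∑_{i∈S} c_{i,j}/σ_i)^{-γ_j}`. -/
theorem maximum_survival_inclusion_exclusion
    (n : ℕ) (hn : 1 ≤ n)
    (σ : Fin n → ℝ) (hσ : ∀ i, 0 < σ i)
    (γ : Fin (n + 1) → ℝ) (hγ : ∀ j, 0 < γ j)
    (c : Fin n → Fin (n + 1) → ℝ) (hc : ∀ i j, c i j = 0 ∨ c i j = 1)
    (hrow : ∀ i, ∃ j, c i j = 1)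
    (x : ℝ) (hx : 0 ≤ x) :
    (paretoModelMeasure n γ {q | ∃ i, x < paretoCoord n σ c i q}).toReal
        = ∑ S ∈ Finset.univ.powerset.filter Finset.Nonempty,
            (-1 : ℝ) ^ (S.card - 1)
              * (paretoModelMeasure n γ {q | ∀ i ∈ S, x < paretoCoord n σ c i q}).toReal
      ∧ (paretoModelMeasure n γ {q | ∃ i, x < paretoCoord n σ c i q}).toReal
          = ∑ S ∈ Finset.univ.powerset.filter Finset.Nonempty,
              (-1 : ℝ) ^ (S.card - 1)
                * ∏ j, (1 + x * ∑ i ∈ S, c i j / σ i) ^ (-(γ j)) := by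
  classical
  have hc0 : ∀ i j, 0 ≤ c i j := fun i j => by rcases hc i j with h | h <;> simp [h]
  haveI hPy : ∀ j : Fin (n+1), IsProbabilityMeasure (gammaMeasure (γ j) 1) :=
    fun j => isProbabilityMeasure_gammaMeasure (hγ j) one_pos
  haveI hPe : IsProbabilityMeasure (gammaMeasure (1:ℝ) 1) :=
    isProbabilityMeasure_gammaMeasure one_pos one_pos
  simp only [paretoModelMeasure, paretoCoord]
  set μL : Measure (Fin n → ℝ) := Measure.pi (fun _ : Fin n => gammaMeasure 1 1) with hμL
  set μy : Measure (Fin (n+1) → ℝ) := Measure.pi (fun j => gammaMeasure (γ j) 1) with hμy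
  haveI : IsProbabilityMeasure μL := by rw [hμL]; infer_instance
  haveI : IsProbabilityMeasure μy := by rw [hμy]; infer_instance
  -- nonnegativity facts
  have hs0 : ∀ (S : Finset (Fin n)) (j : Fin (n+1)), 0 ≤ x * ∑ i ∈ S, c i j / σ i :=
    fun S j => mul_nonneg hx (Finset.sum_nonneg fun i _ => div_nonneg (hc0 i j) (hσ i).le)
  have hprod_nonneg : ∀ S : Finset (Fin n),
      0 ≤ ∏ j, (1 + x * ∑ i ∈ S, c i j / σ i) ^ (-(γ j)) :=
    fun S => Finset.prod_nonneg fun j _ => Real.rpow_nonneg (by linarith [hs0 S j]) _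
  -- a.e. positivity of the gamma coordinates
  have hG : ∀ᵐ y ∂μy, ∀ j, 0 < y j := by
    rw [hμy]; exact ae_pi_pos _ (fun j => gammaMeasure_Iic_zero _ _)
  -- positivity of denominators
  have hD : ∀ y : Fin (n+1) → ℝ, (∀ j, 0 < y j) → ∀ i, 0 < ∑ j, c i j * y j := by
    intro y hy i
    obtain ⟨j0, hj0⟩ := hrow i
    refine Finset.sum_pos' (fun j _ => mul_nonneg (hc0 i j) (hy j).le)
      ⟨j0, Finset.mem_univ _, ?_⟩
    rw [hj0, one_mul]; exact hy j0
  have ha_nonneg : ∀ y : Fin (n+1) → ℝ, (∀ j, 0 < y j) →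
      ∀ i, 0 ≤ x * (∑ j, c i j * y j) / σ i :=
    fun y hy i => div_nonneg (mul_nonneg hx (hD y hy i).le) (hσ i).le
  have hiff : ∀ y : Fin (n+1) → ℝ, (∀ j, 0 < y j) → ∀ i (l : ℝ),
      (x < σ i * l / ∑ j, c i j * y j) ↔ (x * (∑ j, c i j * y j) / σ i < l) := by
    intro y hy i l
    rw [lt_div_iff₀ (hD y hy i), div_lt_iff₀ (hσ i), mul_comm (σ i) l]
  -- measurability
  have hXm : ∀ i, Measurable fun q : (Fin n → ℝ) × (Fin (n+1) → ℝ) =>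
      σ i * q.1 i / ∑ j, c i j * q.2 j := by
    intro i
    exact (measurable_const.mul ((measurable_pi_apply i).comp measurable_fst)).div
      (Finset.measurable_sum _ fun j _ =>
        measurable_const.mul ((measurable_pi_apply j).comp measurable_snd))
  have hAm : ∀ S : Finset (Fin n), MeasurableSet
      {q : (Fin n → ℝ) × (Fin (n+1) → ℝ) | ∀ i ∈ S, x < σ i * q.1 i / ∑ j, c i j * q.2 j} := by
    intro S
    have : {q : (Fin n → ℝ) × (Fin (n+1) → ℝ) | ∀ i ∈ S, x < σ i * q.1 i / ∑ j, c i j * q.2 j}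
        = ⋂ i ∈ S, {q | x < σ i * q.1 i / ∑ j, c i j * q.2 j} := by
      ext q; simp
    rw [this]
    exact MeasurableSet.biInter S.countable_toSet
      (fun i _ => measurableSet_lt measurable_const (hXm i))
  have hEm : MeasurableSet
      {q : (Fin n → ℝ) × (Fin (n+1) → ℝ) | ∃ i, x < σ i * q.1 i / ∑ j, c i j * q.2 j} := by
    have : {q : (Fin n → ℝ) × (Fin (n+1) → ℝ) | ∃ i, x < σ i * q.1 i / ∑ j, c i j * q.2 j}
        = ⋃ i, {q | x < σ i * q.1 i / ∑ j, c i j * q.2 j} := by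
      ext q; simp
    rw [this]
    exact MeasurableSet.iUnion fun i => measurableSet_lt measurable_const (hXm i)
  -- exponent rearrangement
  have hsum_a : ∀ (S : Finset (Fin n)) (y : Fin (n+1) → ℝ),
      ∑ i ∈ S, x * (∑ j, c i j * y j) / σ i
        = ∑ j, (x * ∑ i ∈ S, c i j / σ i) * y j := by
    intro S y
    calc ∑ i ∈ S, x * (∑ j, c i j * y j) / σ i
        = ∑ i ∈ S, ∑ j, x * (c i j * y j) / σ i := by
          refine Finset.sum_congr rfl fun i _ => ?_
          rw [Finset.mul_sum, Finset.sum_div]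
      _ = ∑ j, ∑ i ∈ S, x * (c i j * y j) / σ i := Finset.sum_comm
      _ = ∑ j, (x * ∑ i ∈ S, c i j / σ i) * y j := by
          refine Finset.sum_congr rfl fun j _ => ?_
          rw [Finset.mul_sum, Finset.sum_mul]
          exact Finset.sum_congr rfl fun i _ => by ring
  -- main Laplace-transform computation
  have hM : ∀ S : Finset (Fin n),
      ∫⁻ y, ENNReal.ofReal (exp (-(∑ i ∈ S, x * (∑ j, c i j * y j) / σ i))) ∂μy
        = ENNReal.ofReal (∏ j, (1 + x * ∑ i ∈ S, c i j / σ i) ^ (-(γ j))) := by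
    intro S
    have hrw : ∀ y : Fin (n+1) → ℝ,
        ENNReal.ofReal (exp (-(∑ i ∈ S, x * (∑ j, c i j * y j) / σ i)))
          = ∏ j, ENNReal.ofReal (exp (-((x * ∑ i ∈ S, c i j / σ i) * y j))) := by
      intro y
      rw [hsum_a S y, ← ENNReal.ofReal_prod_of_nonneg (fun j _ => exp_nonneg _),
        prod_exp_neg]
    simp only [hrw]
    rw [hμy]
    rw [lintegral_pi_prod (fun j => gammaMeasure (γ j) 1) (fun j => inferInstance)
      (fun j t => ENNReal.ofReal (exp (-((x * ∑ i ∈ S, c i j / σ i) * t))))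
      (fun j => (Real.measurable_exp.comp ((measurable_id.const_mul _).neg)).ennreal_ofReal)]
    rw [Finset.prod_congr rfl fun j _ => gamma_laplace (hγ j) (hs0 S j)]
    rw [← ENNReal.ofReal_prod_of_nonneg
      (fun j _ => Real.rpow_nonneg (by linarith [hs0 S j]) _)]
  -- survival of the sub-minimum
  have hN1 : ∀ S : Finset (Fin n),
      μL.prod μy {q | ∀ i ∈ S, x < σ i * q.1 i / ∑ j, c i j * q.2 j}
        = ∫⁻ y, ENNReal.ofReal (exp (-(∑ i ∈ S, x * (∑ j, c i j * y j) / σ i))) ∂μy := by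
    intro S
    rw [Measure.prod_apply_symm (hAm S)]
    refine lintegral_congr_ae (hG.mono fun y hy => ?_)
    dsimp only
    have hpre : ((fun l : Fin n → ℝ => (l, y)) ⁻¹'
          {q : (Fin n → ℝ) × (Fin (n+1) → ℝ) | ∀ i ∈ S, x < σ i * q.1 i / ∑ j, c i j * q.2 j})
        = Set.pi Set.univ
            (fun i => if i ∈ S then Set.Ioi (x * (∑ j, c i j * y j) / σ i) else Set.univ) := by
      ext l
      simp only [Set.mem_preimage, Set.mem_setOf_eq, Set.mem_pi, Set.mem_univ, true_implies]
      constructor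
      · intro h i
        by_cases hi : i ∈ S
        · simp only [if_pos hi, Set.mem_Ioi]
          exact (hiff y hy i (l i)).1 (h i hi)
        · simp [hi]
      · intro h i hi
        have := h i
        rw [if_pos hi] at this
        exact (hiff y hy i (l i)).2 this
    rw [hpre, hμL, Measure.pi_pi]
    rw [Finset.prod_congr rfl (fun i (_ : i ∈ Finset.univ) => show
        (gammaMeasure 1 1) (if i ∈ S then Set.Ioi (x * (∑ j, c i j * y j) / σ i) else Set.univ)
          = if i ∈ S then ENNReal.ofReal (exp (-(x * (∑ j, c i j * y j) / σ i))) else 1 from by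
      by_cases hi : i ∈ S
      · simp only [if_pos hi]; exact gammaOne_Ioi (ha_nonneg y hy i)
      · simp [hi])]
    rw [Finset.prod_ite_mem, Finset.univ_inter,
      ← ENNReal.ofReal_prod_of_nonneg (fun i _ => exp_nonneg _), prod_exp_neg]
  -- value of the sub-minimum survival
  have hB : ∀ S : Finset (Fin n),
      (μL.prod μy {q | ∀ i ∈ S, x < σ i * q.1 i / ∑ j, c i j * q.2 j}).toReal
        = ∏ j, (1 + x * ∑ i ∈ S, c i j / σ i) ^ (-(γ j)) := by
    intro S
    rw [hN1 S, hM S, ENNReal.toReal_ofReal (hprod_nonneg S)]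
  -- survival of the maximum as a lintegral
  have hN2 : μL.prod μy {q | ∃ i, x < σ i * q.1 i / ∑ j, c i j * q.2 j}
      = ∫⁻ y, ENNReal.ofReal
          (1 - ∏ i, (1 - exp (-(x * (∑ j, c i j * y j) / σ i)))) ∂μy := by
    rw [Measure.prod_apply_symm hEm]
    refine lintegral_congr_ae (hG.mono fun y hy => ?_)
    dsimp only
    have hpre : ((fun l : Fin n → ℝ => (l, y)) ⁻¹'
          {q : (Fin n → ℝ) × (Fin (n+1) → ℝ) | ∃ i, x < σ i * q.1 i / ∑ j, c i j * q.2 j})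
        = (Set.pi Set.univ fun i => Set.Iic (x * (∑ j, c i j * y j) / σ i))ᶜ := by
      ext l
      simp only [Set.mem_preimage, Set.mem_setOf_eq, Set.mem_compl_iff, Set.mem_pi, Set.mem_univ,
        true_implies, not_forall, Set.mem_Iic, not_le]
      constructor
      · rintro ⟨i, hi⟩; exact ⟨i, (hiff y hy i (l i)).1 hi⟩
      · rintro ⟨i, hi⟩; exact ⟨i, (hiff y hy i (l i)).2 hi⟩
    rw [hpre, prob_compl_eq_one_sub (MeasurableSet.univ_pi fun i => measurableSet_Iic),
      hμL, Measure.pi_pi]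
    rw [Finset.prod_congr rfl fun i _ => gammaOne_Iic (ha_nonneg y hy i)]
    have hfac : ∀ i : Fin n, 0 ≤ 1 - exp (-(x * (∑ j, c i j * y j) / σ i)) := by
      intro i
      have h1 : exp (-(x * (∑ j, c i j * y j) / σ i)) ≤ 1 :=
        Real.exp_le_one_iff.mpr (neg_nonpos.mpr (ha_nonneg y hy i))
      linarith
    rw [← ENNReal.ofReal_prod_of_nonneg (fun i _ => hfac i),
      ENNReal.ofReal_sub 1 (Finset.prod_nonneg fun i _ => hfac i), ENNReal.ofReal_one]
  -- integrability and bounds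
  have hm1 : ∀ i, Measurable fun y : Fin (n+1) → ℝ => x * (∑ j, c i j * y j) / σ i :=
    fun i => (measurable_const.mul (Finset.measurable_sum _ fun j _ =>
      measurable_const.mul (measurable_pi_apply j))).div_const _
  have hmexp : ∀ S : Finset (Fin n), Measurable fun y : Fin (n+1) → ℝ =>
      exp (-(∑ i ∈ S, x * (∑ j, c i j * y j) / σ i)) :=
    fun S => Real.measurable_exp.comp (Measurable.neg
      (Finset.measurable_sum _ fun i _ => hm1 i))
  have hint_exp : ∀ S : Finset (Fin n),
      Integrable (fun y : Fin (n+1) → ℝ =>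
        exp (-(∑ i ∈ S, x * (∑ j, c i j * y j) / σ i))) μy := by
    intro S
    refine (integrable_const (1:ℝ)).mono' (hmexp S).aestronglyMeasurable
      (hG.mono fun y hy => ?_)
    rw [Real.norm_eq_abs, abs_of_nonneg (exp_nonneg _)]
    exact Real.exp_le_one_iff.mpr (neg_nonpos.mpr
      (Finset.sum_nonneg fun i _ => ha_nonneg y hy i))
  have hIexp : ∀ S : Finset (Fin n),
      ∫ y, exp (-(∑ i ∈ S, x * (∑ j, c i j * y j) / σ i)) ∂μy
        = ∏ j, (1 + x * ∑ i ∈ S, c i j / σ i) ^ (-(γ j)) := by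
    intro S
    have h1 := ofReal_integral_eq_lintegral_ofReal (hint_exp S)
      (ae_of_all _ fun y => exp_nonneg _)
    have h2 := congrArg ENNReal.toReal (h1.trans (hM S))
    rwa [ENNReal.toReal_ofReal (integral_nonneg fun y => exp_nonneg _),
      ENNReal.toReal_ofReal (hprod_nonneg S)] at h2
  have hgmeas : Measurable fun y : Fin (n+1) → ℝ =>
      1 - ∏ i, (1 - exp (-(x * (∑ j, c i j * y j) / σ i))) := by
    exact measurable_const.sub (Finset.measurable_prod _ fun i _ =>
      measurable_const.sub (Real.measurable_exp.comp (hm1 i).neg))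
  have h01 : ∀ y : Fin (n+1) → ℝ, (∀ j, 0 < y j) →
      0 ≤ 1 - ∏ i, (1 - exp (-(x * (∑ j, c i j * y j) / σ i)))
        ∧ 1 - ∏ i, (1 - exp (-(x * (∑ j, c i j * y j) / σ i))) ≤ 1 := by
    intro y hy
    have hfac : ∀ i : Fin n, 0 ≤ 1 - exp (-(x * (∑ j, c i j * y j) / σ i))
        ∧ 1 - exp (-(x * (∑ j, c i j * y j) / σ i)) ≤ 1 := by
      intro i
      have h1 : exp (-(x * (∑ j, c i j * y j) / σ i)) ≤ 1 :=
        Real.exp_le_one_iff.mpr (neg_nonpos.mpr (ha_nonneg y hy i))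
      have h2 := exp_nonneg (-(x * (∑ j, c i j * y j) / σ i))
      constructor <;> linarith
    have hp0 : 0 ≤ ∏ i, (1 - exp (-(x * (∑ j, c i j * y j) / σ i))) :=
      Finset.prod_nonneg fun i _ => (hfac i).1
    have hp1 : ∏ i, (1 - exp (-(x * (∑ j, c i j * y j) / σ i))) ≤ 1 :=
      Finset.prod_le_one (fun i _ => (hfac i).1) (fun i _ => (hfac i).2)
    constructor <;> linarith
  have hint_g : Integrable (fun y : Fin (n+1) → ℝ =>
      1 - ∏ i, (1 - exp (-(x * (∑ j, c i j * y j) / σ i)))) μy := by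
    refine (integrable_const (1:ℝ)).mono' hgmeas.aestronglyMeasurable
      (hG.mono fun y hy => ?_)
    rw [Real.norm_eq_abs, abs_le]
    exact ⟨by linarith [(h01 y hy).1], (h01 y hy).2⟩
  -- the alternating-sum expansion of the integrand
  have hg_sum : ∀ y : Fin (n+1) → ℝ,
      1 - ∏ i, (1 - exp (-(x * (∑ j, c i j * y j) / σ i)))
        = ∑ S ∈ Finset.univ.powerset.filter Finset.Nonempty,
            (-1 : ℝ) ^ (S.card - 1) * exp (-(∑ i ∈ S, x * (∑ j, c i j * y j) / σ i)) := by
    intro y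
    rw [aux_ie (fun i => exp (-(x * (∑ j, c i j * y j) / σ i)))]
    exact Finset.sum_congr rfl fun S _ => by rw [prod_exp_neg]
  -- final computation of the maximum survival
  have hA : (μL.prod μy {q | ∃ i, x < σ i * q.1 i / ∑ j, c i j * q.2 j}).toReal
      = ∑ S ∈ Finset.univ.powerset.filter Finset.Nonempty,
          (-1 : ℝ) ^ (S.card - 1) * ∏ j, (1 + x * ∑ i ∈ S, c i j / σ i) ^ (-(γ j)) := by
    rw [hN2,
      ← ofReal_integral_eq_lintegral_ofReal hint_g (hG.mono fun y hy => (h01 y hy).1),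
      ENNReal.toReal_ofReal (integral_nonneg_of_ae (hG.mono fun y hy => (h01 y hy).1))]
    calc ∫ y, (1 - ∏ i, (1 - exp (-(x * (∑ j, c i j * y j) / σ i)))) ∂μy
        = ∫ y, (∑ S ∈ Finset.univ.powerset.filter Finset.Nonempty,
            (-1 : ℝ) ^ (S.card - 1)
              * exp (-(∑ i ∈ S, x * (∑ j, c i j * y j) / σ i))) ∂μy := by
          exact integral_congr_ae (ae_of_all _ fun y => hg_sum y)
      _ = ∑ S ∈ Finset.univ.powerset.filter Finset.Nonempty,
            ∫ y, (-1 : ℝ) ^ (S.card - 1)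
              * exp (-(∑ i ∈ S, x * (∑ j, c i j * y j) / σ i)) ∂μy :=
          integral_finset_sum _ (fun S _ => (hint_exp S).const_mul _)
      _ = ∑ S ∈ Finset.univ.powerset.filter Finset.Nonempty,
            (-1 : ℝ) ^ (S.card - 1) * ∏ j, (1 + x * ∑ i ∈ S, c i j / σ i) ^ (-(γ j)) := by
          refine Finset.sum_congr rfl fun S _ => ?_
          rw [integral_const_mul, hIexp S]
  refine ⟨?_, hA⟩
  rw [hA]
  exact Finset.sum_congr rfl fun S _ => by rw [hB S]
end

section
/- Let (X_k, X_l) be a bivariate Pareto pair defined on the product probability measure ν = Exp(1) ⊗ Exp(1) ⊗ Gamma(γ_0,1) ⊗ Gamma(γ_k,1) ⊗ Gamma(γ_l,1) by X_k = σ_k·λ_k/(y_0 + y_k) and X_l = σ_l·λ_l/(y_0 + y_l), where σ_k, σ_l, γ_0, γ_k, γ_l > 0. Then for all s, t ≥ 0 the conditional survival probability satisfies ν{X_k > s and X_l > t} / ν{X_l > t} = (1 + s/σ_k)^{−γ_k} · (1 + s/(σ_k·(1 + t/σ_l)))^{−γ_0}. -/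
open MeasureTheory ProbabilityTheory Real
open scoped ENNReal

section Aux

lemma bp_gamma_ae_pos {a r : ℝ} : ∀ᵐ y ∂(gammaMeasure a r), 0 < y := by
  rw [ae_iff]
  have h : {y : ℝ | ¬ 0 < y} = Set.Iic 0 := by ext y; simp
  rw [h, gammaMeasure, withDensity_apply _ measurableSet_Iic,
    setLIntegral_congr (Iio_ae_eq_Iic (a := (0:ℝ))).symm]
  exact lintegral_gammaPDF_of_nonpos le_rfl

lemma bp_exp_survival {c : ℝ} (hc : 0 ≤ c) :
    gammaMeasure 1 1 {x : ℝ | c < x} = ENNReal.ofReal (exp (-c)) := by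
  have hprob : IsProbabilityMeasure (gammaMeasure 1 1) :=
    isProbabilityMeasure_gammaMeasure one_pos one_pos
  have h1 : {x : ℝ | c < x} = (Set.Iic c)ᶜ := by ext x; simp
  have hIic : gammaMeasure 1 1 (Set.Iic c) = ENNReal.ofReal (1 - exp (-(1 * c))) := by
    rw [gammaMeasure, withDensity_apply _ measurableSet_Iic]
    have hpdf : ∀ y : ℝ, gammaPDF 1 1 y = exponentialPDF 1 y := fun _ => rfl
    simp_rw [hpdf]
    rw [lintegral_exponentialPDF_eq_antiDeriv one_pos c, if_pos hc]
  have hq : 0 ≤ 1 - exp (-(1 * c)) := by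
    have : exp (-(1 * c)) ≤ 1 := exp_le_one_iff.2 (by linarith)
    linarith
  rw [h1, measure_compl measurableSet_Iic (measure_ne_top _ _), measure_univ, hIic,
    ← ENNReal.ofReal_one, ← ENNReal.ofReal_sub _ hq]
  congr 1
  rw [one_mul]
  ring

lemma bp_exp_survival' {σ s d : ℝ} (hσ : 0 < σ) (hs : 0 ≤ s) (hd : 0 < d) :
    gammaMeasure 1 1 {x : ℝ | s < σ * x / d} = ENNReal.ofReal (exp (-(s / σ * d))) := by
  have hset : {x : ℝ | s < σ * x / d} = {x : ℝ | s / σ * d < x} := by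
    ext x
    simp only [Set.mem_setOf_eq]
    rw [lt_div_iff₀ hd, div_mul_eq_mul_div, div_lt_iff₀ hσ, mul_comm x σ]
  rw [hset, bp_exp_survival (by positivity)]

lemma bp_gamma_laplace {a u : ℝ} (ha : 0 < a) (hu : 0 ≤ u) :
    ∫⁻ y, ENNReal.ofReal (exp (-(u * y))) ∂(gammaMeasure a 1)
      = ENNReal.ofReal ((1 + u) ^ (-a)) := by
  have h1u : (0:ℝ) < 1 + u := by linarith
  have hg1 : Measurable (gammaPDF a 1) := (measurable_gammaPDFReal a 1).ennreal_ofReal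
  have hg2 : Measurable (gammaPDF a (1 + u)) := (measurable_gammaPDFReal a (1 + u)).ennreal_ofReal
  have hexp : Measurable fun y : ℝ => ENNReal.ofReal (exp (-(u * y))) :=
    ((measurable_const.mul measurable_id).neg.exp).ennreal_ofReal
  rw [gammaMeasure, lintegral_withDensity_eq_lintegral_mul _ hg1 hexp]
  have key : ∀ y : ℝ, gammaPDF a 1 y * ENNReal.ofReal (exp (-(u * y)))
      = ENNReal.ofReal ((1 + u) ^ (-a)) * gammaPDF a (1 + u) y := by
    intro y
    rcases le_or_gt 0 y with hy | hy
    · rw [gammaPDF_of_nonneg hy, gammaPDF_of_nonneg hy,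
        ← ENNReal.ofReal_mul (by positivity), ← ENNReal.ofReal_mul (by positivity)]
      congr 1
      have hΓ : Gamma a ≠ 0 := (Gamma_pos_of_pos ha).ne'
      have h2 : (1 + u) ^ (-a) * (1 + u) ^ a = 1 := by
        rw [← rpow_add h1u, neg_add_cancel, rpow_zero]
      have hexp2 : exp (-((1 + u) * y)) = exp (-(1 * y)) * exp (-(u * y)) := by
        rw [← exp_add]; ring_nf
      rw [one_rpow, hexp2]
      simp only [one_mul]
      field_simp
      linear_combination (-(y ^ (a - 1))) * h2
    · rw [gammaPDF_of_neg hy, gammaPDF_of_neg hy, zero_mul, mul_zero]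
  calc ∫⁻ y, (gammaPDF a 1 * fun y => ENNReal.ofReal (exp (-(u * y)))) y
      = ∫⁻ y, ENNReal.ofReal ((1 + u) ^ (-a)) * gammaPDF a (1 + u) y :=
        lintegral_congr fun y => key y
    _ = ENNReal.ofReal ((1 + u) ^ (-a)) * ∫⁻ y, gammaPDF a (1 + u) y :=
        lintegral_const_mul _ hg2
    _ = ENNReal.ofReal ((1 + u) ^ (-a)) := by
        rw [lintegral_gammaPDF_eq_one ha h1u, mul_one]

lemma bp_prod_fst_ae {α β : Type*} [MeasurableSpace α] [MeasurableSpace β]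
    (μ : Measure α) (ν : Measure β) [SFinite μ] [SFinite ν] {p : α → Prop}
    (hp : MeasurableSet {x | ¬ p x}) (h : ∀ᵐ x ∂μ, p x) :
    ∀ᵐ z ∂(μ.prod ν), p z.1 := by
  rw [ae_iff] at h ⊢
  have hset : {z : α × β | ¬ p z.1} = {x | ¬ p x} ×ˢ Set.univ := by ext z; simp
  rw [hset, Measure.prod_prod, h, zero_mul]

lemma bp_prod_snd_ae {α β : Type*} [MeasurableSpace α] [MeasurableSpace β]
    (μ : Measure α) (ν : Measure β) [SFinite μ] [SFinite ν] {p : β → Prop}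
    (hp : MeasurableSet {x | ¬ p x}) (h : ∀ᵐ x ∂ν, p x) :
    ∀ᵐ z ∂(μ.prod ν), p z.2 := by
  rw [ae_iff] at h ⊢
  have hset : {z : α × β | ¬ p z.2} = Set.univ ×ˢ {x | ¬ p x} := by ext z; simp
  rw [hset, Measure.prod_prod, h, mul_zero]

lemma bp_lintegral_ite_one {α : Type*} [MeasurableSpace α] {μ : Measure α} {Q : α → Prop}
    [DecidablePred Q] (hQ : MeasurableSet {x | Q x}) :
    ∫⁻ x, (if Q x then (1 : ℝ≥0∞) else 0) ∂μ = μ {x | Q x} := by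
  rw [← lintegral_indicator_one hQ]
  exact lintegral_congr fun x => by simp [Set.indicator_apply]

lemma bp_ofReal_exp_mul (x y : ℝ) :
    ENNReal.ofReal (exp x) * ENNReal.ofReal (exp y) = ENNReal.ofReal (exp (x + y)) := by
  rw [exp_add, ENNReal.ofReal_mul (exp_nonneg x)]

end Aux

section Main

lemma bp_ae_pos_all {γ0 γk γl : ℝ} (hγ0 : 0 < γ0) (hγk : 0 < γk) (hγl : 0 < γl) :
    ∀ᵐ w ∂((gammaMeasure 1 1).prod ((gammaMeasure 1 1).prod
        ((gammaMeasure γ0 1).prod ((gammaMeasure γk 1).prod (gammaMeasure γl 1))))),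
      0 < w.1 ∧ 0 < w.2.2.1 ∧ 0 < w.2.2.2.1 := by
  haveI iE : IsProbabilityMeasure (gammaMeasure (1:ℝ) 1) :=
    isProbabilityMeasure_gammaMeasure one_pos one_pos
  haveI i0 : IsProbabilityMeasure (gammaMeasure γ0 1) := isProbabilityMeasure_gammaMeasure hγ0 one_pos
  haveI ik : IsProbabilityMeasure (gammaMeasure γk 1) := isProbabilityMeasure_gammaMeasure hγk one_pos
  haveI il : IsProbabilityMeasure (gammaMeasure γl 1) := isProbabilityMeasure_gammaMeasure hγl one_pos
  have hm : MeasurableSet {y : ℝ | ¬ 0 < y} := by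
    simp only [not_lt]; exact measurableSet_Iic
  have h1 : ∀ᵐ w ∂((gammaMeasure 1 1).prod ((gammaMeasure 1 1).prod
        ((gammaMeasure γ0 1).prod ((gammaMeasure γk 1).prod (gammaMeasure γl 1))))),
      0 < w.1 :=
    bp_prod_fst_ae _ _ hm bp_gamma_ae_pos
  have h2 : ∀ᵐ w ∂((gammaMeasure 1 1).prod ((gammaMeasure 1 1).prod
        ((gammaMeasure γ0 1).prod ((gammaMeasure γk 1).prod (gammaMeasure γl 1))))),
      0 < w.2.2.1 := by
    refine bp_prod_snd_ae _ _ (p := fun r : ℝ × ℝ × ℝ × ℝ => 0 < r.2.1)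
      (measurable_fst.comp measurable_snd hm) ?_
    exact bp_prod_snd_ae _ _ (p := fun v : ℝ × ℝ × ℝ => 0 < v.1)
      (measurable_fst hm) (bp_prod_fst_ae _ _ hm bp_gamma_ae_pos)
  have h3 : ∀ᵐ w ∂((gammaMeasure 1 1).prod ((gammaMeasure 1 1).prod
        ((gammaMeasure γ0 1).prod ((gammaMeasure γk 1).prod (gammaMeasure γl 1))))),
      0 < w.2.2.2.1 := by
    refine bp_prod_snd_ae _ _ (p := fun r : ℝ × ℝ × ℝ × ℝ => 0 < r.2.2.1)
      ((measurable_fst.comp (measurable_snd.comp measurable_snd)) hm) ?_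
    refine bp_prod_snd_ae _ _ (p := fun v : ℝ × ℝ × ℝ => 0 < v.2.1)
      ((measurable_fst.comp measurable_snd) hm) ?_
    exact bp_prod_snd_ae _ _ (p := fun q : ℝ × ℝ => 0 < q.1)
      (measurable_fst hm) (bp_prod_fst_ae _ _ hm bp_gamma_ae_pos)
  exact (h1.and (h2.and h3))

lemma bp_joint_survival (σk σl γ0 γk γl : ℝ)
    (hσk : 0 < σk) (hσl : 0 < σl) (hγ0 : 0 < γ0) (hγk : 0 < γk) (hγl : 0 < γl)
    (s t : ℝ) (hs : 0 ≤ s) (ht : 0 ≤ t) :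
    ((gammaMeasure 1 1).prod ((gammaMeasure 1 1).prod
        ((gammaMeasure γ0 1).prod ((gammaMeasure γk 1).prod (gammaMeasure γl 1)))))
      {w : ℝ × ℝ × ℝ × ℝ × ℝ |
        s < σk * w.1 / (w.2.2.1 + w.2.2.2.1) ∧ t < σl * w.2.1 / (w.2.2.1 + w.2.2.2.2)}
    = ENNReal.ofReal ((1 + s / σk + t / σl) ^ (-γ0)
        * ((1 + s / σk) ^ (-γk) * (1 + t / σl) ^ (-γl))) := by
  classical
  haveI iE : IsProbabilityMeasure (gammaMeasure (1:ℝ) 1) :=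
    isProbabilityMeasure_gammaMeasure one_pos one_pos
  haveI i0 : IsProbabilityMeasure (gammaMeasure γ0 1) := isProbabilityMeasure_gammaMeasure hγ0 one_pos
  haveI ik : IsProbabilityMeasure (gammaMeasure γk 1) := isProbabilityMeasure_gammaMeasure hγk one_pos
  haveI il : IsProbabilityMeasure (gammaMeasure γl 1) := isProbabilityMeasure_gammaMeasure hγl one_pos
  set μE : Measure ℝ := gammaMeasure 1 1 with hμE
  set μ0 : Measure ℝ := gammaMeasure γ0 1 with hμ0
  set μk : Measure ℝ := gammaMeasure γk 1 with hμk
  set μl : Measure ℝ := gammaMeasure γl 1 with hμl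
  set V : Measure (ℝ × ℝ × ℝ) := μ0.prod (μk.prod μl) with hVdef
  set W : Measure (ℝ × ℝ × ℝ × ℝ) := μE.prod V with hWdef
  have hm : MeasurableSet {y : ℝ | ¬ 0 < y} := by
    simp only [not_lt]; exact measurableSet_Iic
  have m1 : Measurable fun w : ℝ × ℝ × ℝ × ℝ × ℝ => σk * w.1 / (w.2.2.1 + w.2.2.2.1) := by
    fun_prop
  have m2 : Measurable fun w : ℝ × ℝ × ℝ × ℝ × ℝ => σl * w.2.1 / (w.2.2.1 + w.2.2.2.2) := by
    fun_prop
  have hA : MeasurableSet {w : ℝ × ℝ × ℝ × ℝ × ℝ |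
      s < σk * w.1 / (w.2.2.1 + w.2.2.2.1) ∧ t < σl * w.2.1 / (w.2.2.1 + w.2.2.2.2)} := by
    rw [Set.setOf_and]
    exact (measurableSet_lt measurable_const m1).inter (measurableSet_lt measurable_const m2)
  have haeW : ∀ᵐ r ∂W, 0 < r.2.1 ∧ 0 < r.2.2.1 := by
    have ha : ∀ᵐ r ∂W, 0 < r.2.1 :=
      bp_prod_snd_ae _ _ (p := fun v : ℝ × ℝ × ℝ => 0 < v.1)
        (measurable_fst hm) (bp_prod_fst_ae _ _ hm bp_gamma_ae_pos)
    have hb : ∀ᵐ r ∂W, 0 < r.2.2.1 := by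
      refine bp_prod_snd_ae _ _ (p := fun v : ℝ × ℝ × ℝ => 0 < v.2.1)
        ((measurable_fst.comp measurable_snd) hm) ?_
      exact bp_prod_snd_ae _ _ (p := fun q : ℝ × ℝ => 0 < q.1)
        (measurable_fst hm) (bp_prod_fst_ae _ _ hm bp_gamma_ae_pos)
    exact ha.and hb
  have haeV : ∀ᵐ v ∂V, 0 < v.1 ∧ 0 < v.2.2 := by
    have ha : ∀ᵐ v ∂V, 0 < v.1 := bp_prod_fst_ae _ _ hm bp_gamma_ae_pos
    have hb : ∀ᵐ v ∂V, 0 < v.2.2 := by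
      refine bp_prod_snd_ae _ _ (p := fun q : ℝ × ℝ => 0 < q.2)
        (measurable_snd hm) ?_
      exact bp_prod_snd_ae _ _ (p := fun y : ℝ => 0 < y) hm bp_gamma_ae_pos
    exact ha.and hb
  have hite : Measurable fun r : ℝ × ℝ × ℝ × ℝ =>
      (if t < σl * r.1 / (r.2.1 + r.2.2.2) then (1 : ℝ≥0∞) else 0) := by
    refine Measurable.ite ?_ measurable_const measurable_const
    exact measurableSet_lt measurable_const (by fun_prop)
  calc (μE.prod W) {w : ℝ × ℝ × ℝ × ℝ × ℝ | s < σk * w.1 / (w.2.2.1 + w.2.2.2.1) ∧ t < σl * w.2.1 / (w.2.2.1 + w.2.2.2.2)}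
      = ∫⁻ r, μE ((fun x => (x, r)) ⁻¹' {w : ℝ × ℝ × ℝ × ℝ × ℝ |
            s < σk * w.1 / (w.2.2.1 + w.2.2.2.1) ∧ t < σl * w.2.1 / (w.2.2.1 + w.2.2.2.2)}) ∂W :=
        Measure.prod_apply_symm hA
    _ = ∫⁻ r, (if t < σl * r.1 / (r.2.1 + r.2.2.2) then (1 : ℝ≥0∞) else 0)
            * μE {x : ℝ | s < σk * x / (r.2.1 + r.2.2.1)} ∂W := by
        refine lintegral_congr fun r => ?_
        by_cases h : t < σl * r.1 / (r.2.1 + r.2.2.2)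
        · rw [if_pos h, one_mul]; congr 1; ext x; simp [h]
        · rw [if_neg h, zero_mul]
          have he : ((fun x => (x, r)) ⁻¹' {w : ℝ × ℝ × ℝ × ℝ × ℝ |
              s < σk * w.1 / (w.2.2.1 + w.2.2.2.1) ∧ t < σl * w.2.1 / (w.2.2.1 + w.2.2.2.2)})
              = (∅ : Set ℝ) := by ext x; simp [h]
          rw [he]; exact measure_empty
    _ = ∫⁻ r, (if t < σl * r.1 / (r.2.1 + r.2.2.2) then (1 : ℝ≥0∞) else 0)
            * ENNReal.ofReal (exp (-(s / σk * (r.2.1 + r.2.2.1)))) ∂W := by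
        refine lintegral_congr_ae ?_
        filter_upwards [haeW] with r hr
        rw [hμE, bp_exp_survival' hσk hs (by linarith [hr.1, hr.2])]
    _ = ∫⁻ v, (∫⁻ x, (if t < σl * x / (v.1 + v.2.2) then (1 : ℝ≥0∞) else 0)
            * ENNReal.ofReal (exp (-(s / σk * (v.1 + v.2.1)))) ∂μE) ∂V := by
        rw [hWdef]
        refine lintegral_prod_symm _ ?_
        refine Measurable.aemeasurable (Measurable.mul hite ?_)
        fun_prop
    _ = ∫⁻ v, μE {x : ℝ | t < σl * x / (v.1 + v.2.2)}
            * ENNReal.ofReal (exp (-(s / σk * (v.1 + v.2.1)))) ∂V := by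
        refine lintegral_congr fun v => ?_
        have hQ : MeasurableSet {x : ℝ | t < σl * x / (v.1 + v.2.2)} :=
          measurableSet_lt measurable_const (by fun_prop)
        rw [lintegral_mul_const _ (Measurable.ite hQ measurable_const measurable_const),
          bp_lintegral_ite_one hQ]
    _ = ∫⁻ v, ENNReal.ofReal (exp (-(t / σl * (v.1 + v.2.2))))
            * ENNReal.ofReal (exp (-(s / σk * (v.1 + v.2.1)))) ∂V := by
        refine lintegral_congr_ae ?_
        filter_upwards [haeV] with v hv
        rw [hμE, bp_exp_survival' hσl ht (by linarith [hv.1, hv.2])]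
    _ = ∫⁻ v, ENNReal.ofReal (exp (-((s / σk + t / σl) * v.1)))
            * (ENNReal.ofReal (exp (-(s / σk * v.2.1)))
              * ENNReal.ofReal (exp (-(t / σl * v.2.2)))) ∂V := by
        refine lintegral_congr fun v => ?_
        simp only [bp_ofReal_exp_mul]
        exact congrArg _ (congrArg _ (by ring))
    _ = (∫⁻ y, ENNReal.ofReal (exp (-((s / σk + t / σl) * y))) ∂μ0)
          * ((∫⁻ y, ENNReal.ofReal (exp (-(s / σk * y))) ∂μk)
            * (∫⁻ y, ENNReal.ofReal (exp (-(t / σl * y))) ∂μl)) := by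
        rw [hVdef, lintegral_prod _ (Measurable.aemeasurable (by fun_prop))]
        have hinner : ∀ y0 : ℝ,
            (∫⁻ p, ENNReal.ofReal (exp (-((s / σk + t / σl) * y0)))
                * (ENNReal.ofReal (exp (-(s / σk * p.1)))
                  * ENNReal.ofReal (exp (-(t / σl * p.2)))) ∂(μk.prod μl))
            = ENNReal.ofReal (exp (-((s / σk + t / σl) * y0)))
                * ((∫⁻ y, ENNReal.ofReal (exp (-(s / σk * y))) ∂μk)
                  * (∫⁻ y, ENNReal.ofReal (exp (-(t / σl * y))) ∂μl)) := by
          intro y0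
          rw [lintegral_const_mul _ (by fun_prop : Measurable fun p : ℝ × ℝ =>
              ENNReal.ofReal (exp (-(s / σk * p.1))) * ENNReal.ofReal (exp (-(t / σl * p.2)))),
            lintegral_prod_mul (f := fun y : ℝ => ENNReal.ofReal (exp (-(s / σk * y))))
              (g := fun y : ℝ => ENNReal.ofReal (exp (-(t / σl * y))))
              (Measurable.aemeasurable (by fun_prop)) (Measurable.aemeasurable (by fun_prop))]
        rw [lintegral_congr hinner, lintegral_mul_const _ (by fun_prop)]
    _ = ENNReal.ofReal ((1 + s / σk + t / σl) ^ (-γ0)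
        * ((1 + s / σk) ^ (-γk) * (1 + t / σl) ^ (-γl))) := by
        rw [hμ0, hμk, hμl, bp_gamma_laplace hγ0 (by positivity),
          bp_gamma_laplace hγk (by positivity), bp_gamma_laplace hγl (by positivity),
          ← ENNReal.ofReal_mul (by positivity), ← ENNReal.ofReal_mul (by positivity)]
        rw [show (1:ℝ) + (s / σk + t / σl) = 1 + s / σk + t / σl from by ring]

end Main


/-- the conditional survival function of `X_k` given `X_l > t` in the
bivariate Pareto pair `X_k = σ_k λ_k/(y_0+y_k)`, `X_l = σ_l λ_l/(y_0+y_l)`: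
`ν{X_k > s, X_l > t}/ν{X_l > t} = (1+s/σ_k)^{-γ_k} (1+s/(σ_k(1+t/σ_l)))^{-γ_0}`. -/
theorem bivariate_pareto_conditional_survival_given_exceedance
    (σk σl γ0 γk γl : ℝ)
    (hσk : 0 < σk) (hσl : 0 < σl) (hγ0 : 0 < γ0) (hγk : 0 < γk) (hγl : 0 < γl)
    (ν : Measure (ℝ × ℝ × ℝ × ℝ × ℝ))
    (hν : ν = (gammaMeasure 1 1).prod ((gammaMeasure 1 1).prod
        ((gammaMeasure γ0 1).prod ((gammaMeasure γk 1).prod (gammaMeasure γl 1)))))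
    (Xk Xl : ℝ × ℝ × ℝ × ℝ × ℝ → ℝ)
    (hXk : ∀ w, Xk w = σk * w.1 / (w.2.2.1 + w.2.2.2.1))
    (hXl : ∀ w, Xl w = σl * w.2.1 / (w.2.2.1 + w.2.2.2.2))
    (s t : ℝ) (hs : 0 ≤ s) (ht : 0 ≤ t) :
    ν {w | s < Xk w ∧ t < Xl w} / ν {w | t < Xl w}
      = ENNReal.ofReal
          ((1 + s / σk) ^ (-γk) * (1 + s / (σk * (1 + t / σl))) ^ (-γ0)) := by
  subst hν
  simp only [hXk, hXl]
  -- denominator equals joint survival with s = 0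
  have hden : ((gammaMeasure 1 1).prod ((gammaMeasure 1 1).prod
        ((gammaMeasure γ0 1).prod ((gammaMeasure γk 1).prod (gammaMeasure γl 1)))))
      {w : ℝ × ℝ × ℝ × ℝ × ℝ | t < σl * w.2.1 / (w.2.2.1 + w.2.2.2.2)}
      = ((gammaMeasure 1 1).prod ((gammaMeasure 1 1).prod
        ((gammaMeasure γ0 1).prod ((gammaMeasure γk 1).prod (gammaMeasure γl 1)))))
      {w : ℝ × ℝ × ℝ × ℝ × ℝ |
        0 < σk * w.1 / (w.2.2.1 + w.2.2.2.1) ∧ t < σl * w.2.1 / (w.2.2.1 + w.2.2.2.2)} := by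
    refine measure_congr ?_
    rw [Filter.eventuallyEq_set]
    filter_upwards [bp_ae_pos_all hγ0 hγk hγl] with w hw
    have hpos : 0 < σk * w.1 / (w.2.2.1 + w.2.2.2.1) := by
      have := hw.1; have := hw.2.1; have := hw.2.2
      positivity
    exact ⟨fun h => ⟨hpos, h⟩, fun h => h.2⟩
  rw [hden, bp_joint_survival σk σl γ0 γk γl hσk hσl hγ0 hγk hγl s t hs ht,
    bp_joint_survival σk σl γ0 γk γl hσk hσl hγ0 hγk hγl 0 t le_rfl ht]
  have hb : (0:ℝ) < 1 + t / σl := by positivity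
  have hc : (0:ℝ) < 1 + s / σk + t / σl := by positivity
  have ha : (0:ℝ) < 1 + s / σk := by positivity
  have hQ : (0:ℝ) < (1 + 0 / σk + t / σl) ^ (-γ0)
      * ((1 + 0 / σk) ^ (-γk) * (1 + t / σl) ^ (-γl)) := by positivity
  rw [← ENNReal.ofReal_div_of_pos hQ]
  congr 1
  have h0 : (1:ℝ) + 0 / σk + t / σl = 1 + t / σl := by ring
  have h0' : (1:ℝ) + 0 / σk = 1 := by ring
  rw [h0, h0', one_rpow, one_mul]
  have harg : 1 + s / (σk * (1 + t / σl)) = (1 + s / σk + t / σl) / (1 + t / σl) := by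
    field_simp
    ring
  rw [harg, Real.div_rpow hc.le hb.le]
  have h1 : (1 + t / σl : ℝ) ^ (-γ0) ≠ 0 := (rpow_pos_of_pos hb _).ne'
  have h2 : (1 + t / σl : ℝ) ^ (-γl) ≠ 0 := (rpow_pos_of_pos hb _).ne'
  field_simp
end
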